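/- Let a, b be orthonormal vectors in ℂ², ε > 0, W = a a* + ε² b b*, A = ½ (a+b)(a+b)*, f = W^{1/2} b, g = W^{-1/2} a. Then |⟨A W⁻¹ W^{1/2} f, W W^{-1/2} g⟩| = 1/2, while ‖f‖ ‖g‖ = ε. Hence no constant C (independent of W) satisfies |⟨A W⁻¹ W^{1/2} f, W W^{-1/2} g⟩| ≤ C ‖f‖ ‖g‖ for all W, f, g even though 0 ≤ A ≤ 1 (identity matrix). -/

import Mathlib

open Matrix
open scoped ComplexOrder

/-- The positive semidefinite square root of a positive semidefinite matrix
(as defined in Mathlib of December 2024, since removed). -/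
noncomputable def Matrix.PosSemidef.sqrt {n 𝕜 : Type*} [Fintype n] [RCLike 𝕜] [DecidableEq n]
    {A : Matrix n n 𝕜} (hA : Matrix.PosSemidef A) : Matrix n n 𝕜 :=
  hA.1.eigenvectorUnitary.1 * diagonal ((↑) ∘ (√·) ∘ hA.1.eigenvalues) *
    (star hA.1.eigenvectorUnitary : Matrix n n 𝕜)

/-- Euclidean norm of a vector in `ℂ^d`. -/
noncomputable def euclNorm {d : ℕ} (v : Fin d → ℂ) : ℝ :=
  ‖(EuclideanSpace.equiv (Fin d) ℂ).symm v‖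

open scoped MatrixOrder in
lemma Matrix.PosSemidef.eq_sqrt_of_sq_eq {B A : Matrix (Fin 2) (Fin 2) ℂ} (hB : B.PosSemidef)
    (hA : A.PosSemidef) (h : B ^ 2 = A) : B = hA.sqrt := by
  have e1 : hA.sqrt = hA.1.cfc Real.sqrt := by
    simp [Matrix.PosSemidef.sqrt, IsHermitian.cfc, Function.comp_def]
  rw [e1, ← hA.1.cfc_eq, ← cfcₙ_eq_cfc (hf0 := Real.sqrt_zero), ← CFC.sqrt_eq_real_sqrt A hA.nonneg]
  exact (CFC.sqrt_unique (by rw [← sq, h]) hB.nonneg).symm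

lemma ovv (u w x : Fin 2 → ℂ) : (vecMulVec u w).mulVec x = (w ⬝ᵥ x) • u := by
  ext i
  simp [mulVec, vecMulVec_apply, dotProduct, Finset.mul_sum, Fin.sum_univ_two]
  ring

lemma omul (u w p q : Fin 2 → ℂ) :
    vecMulVec u w * vecMulVec p q = (w ⬝ᵥ p) • vecMulVec u q := by
  ext i j
  simp [mul_apply, vecMulVec_apply, dotProduct, Fin.sum_univ_two]
  ring

lemma oherm (u : Fin 2 → ℂ) : (vecMulVec u (star u)).IsHermitian := by
  ext i j
  simp [conjTranspose_apply, vecMulVec_apply, mul_comm]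

lemma star_dp (u x : Fin 2 → ℂ) : star x ⬝ᵥ u = star (star u ⬝ᵥ x) := by
  simp [dotProduct, mul_comm]

lemma opsd (u : Fin 2 → ℂ) : (vecMulVec u (star u)).PosSemidef := by
  refine PosSemidef.of_dotProduct_mulVec_nonneg (oherm u) (fun x => ?_)
  rw [ovv, dotProduct_smul, smul_eq_mul, star_dp]
  exact star_mul_self_nonneg _

lemma hba' (a b : Fin 2 → ℂ) (hab : star a ⬝ᵥ b = 0) : star b ⬝ᵥ a = 0 := by
  have := congrArg star hab
  simpa [dotProduct, mul_comm] using this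

lemma resolution (a b : Fin 2 → ℂ)
    (ha : star a ⬝ᵥ a = 1) (hb : star b ⬝ᵥ b = 1) (hab : star a ⬝ᵥ b = 0) :
    vecMulVec a (star a) + vecMulVec b (star b) = 1 := by
  have hba := hba' a b hab
  set N : Matrix (Fin 2) (Fin 2) ℂ := of ![star a, star b] with hN
  simp only [dotProduct, Fin.sum_univ_two, Pi.star_apply, RCLike.star_def] at ha hb hab hba
  have h1 : N * Nᴴ = 1 := by
    ext i j
    fin_cases i <;> fin_cases j <;>
      simp [hN, mul_apply, conjTranspose_apply, Fin.sum_univ_two, ha, hb, hab, hba]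
  have h2 : Nᴴ * N = 1 := mul_eq_one_comm.mp h1
  rw [← h2]
  ext i j
  simp [hN, mul_apply, conjTranspose_apply, Fin.sum_univ_two, vecMulVec_apply, mul_comm]

lemma euclNorm_smul {d : ℕ} (c : ℂ) (v : Fin d → ℂ) :
    euclNorm (c • v) = ‖c‖ * euclNorm v := by
  unfold euclNorm
  rw [_root_.map_smul, norm_smul]

lemma euclNorm_unit {d : ℕ} (v : Fin d → ℂ) (h : star v ⬝ᵥ v = 1) : euclNorm v = 1 := by
  have h2 : ∑ i, ‖v i‖ ^ 2 = 1 := by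
    have := congrArg Complex.re h
    simp only [dotProduct, Pi.star_apply, RCLike.star_def, Complex.mul_conj',
      ← Complex.ofReal_sum, Complex.ofReal_re, Complex.one_re] at this
    simp only [Complex.sq_norm, Complex.normSq_apply]
    simpa using this
  unfold euclNorm
  rw [EuclideanSpace.norm_eq]
  have : ∀ i, ‖((EuclideanSpace.equiv (Fin d) ℂ).symm v) i‖ = ‖v i‖ := fun i => rfl
  simp only [this, h2, Real.sqrt_one]

lemma psd_smul {M : Matrix (Fin 2) (Fin 2) ℂ} (hM : M.PosSemidef) {c : ℝ} (hc : 0 ≤ c) :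
    ((c : ℂ) • M).PosSemidef := by
  refine PosSemidef.of_dotProduct_mulVec_nonneg ?_ ?_
  · ext i j
    simp [conjTranspose_apply, hM.1.apply]
  · intro x
    rw [smul_mulVec, dotProduct_smul, smul_eq_mul]
    exact mul_nonneg (by exact_mod_cast Complex.zero_le_real.mpr hc) (hM.dotProduct_mulVec_nonneg x)

lemma comb_mul (a b : Fin 2 → ℂ)
    (ha : star a ⬝ᵥ a = 1) (hb : star b ⬝ᵥ b = 1) (hab : star a ⬝ᵥ b = 0)
    (d d' : ℂ) :
    (vecMulVec a (star a) + d • vecMulVec b (star b)) *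
      (vecMulVec a (star a) + d' • vecMulVec b (star b)) =
    vecMulVec a (star a) + (d * d') • vecMulVec b (star b) := by
  have hba := hba' a b hab
  simp only [add_mul, mul_add, smul_mul_assoc, mul_smul_comm, omul,
    ha, hb, hab, hba, one_smul, zero_smul, smul_zero, smul_smul, add_zero, zero_add]
  rw [mul_comm d' d]

lemma comb_mulVec (a b x : Fin 2 → ℂ) (d : ℂ) :
    (vecMulVec a (star a) + d • vecMulVec b (star b)) *ᵥ x =
      (star a ⬝ᵥ x) • a + (d * (star b ⬝ᵥ x)) • b := by
  rw [add_mulVec, smul_mulVec, ovv, ovv, smul_smul]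

lemma Wpd (a b : Fin 2 → ℂ) (ε : ℝ) (hε : 0 < ε)
    (hres : vecMulVec a (star a) + vecMulVec b (star b) = 1)
    (hherm : (vecMulVec a (star a) + ((ε : ℂ) ^ 2) • vecMulVec b (star b)).IsHermitian) :
    (vecMulVec a (star a) + ((ε : ℂ) ^ 2) • vecMulVec b (star b)).PosDef := by
  refine posDef_iff_dotProduct_mulVec.mpr ⟨hherm, fun x hx => ?_⟩
  simp only [add_mulVec, smul_mulVec, ovv, dotProduct_add, dotProduct_smul,
    smul_eq_mul]
  rw [star_dp a x, star_dp b x]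
  have hz : star a ⬝ᵥ x ≠ 0 ∨ star b ⬝ᵥ x ≠ 0 := by
    by_contra h
    push_neg at h
    apply hx
    have : (1 : Matrix (Fin 2) (Fin 2) ℂ) *ᵥ x = x := one_mulVec x
    rw [← hres, add_mulVec, ovv, ovv, h.1, h.2, zero_smul, zero_smul, add_zero] at this
    exact this.symm
  have e1 : (star a ⬝ᵥ x) * star (star a ⬝ᵥ x) = (Complex.normSq (star a ⬝ᵥ x) : ℂ) := by
    rw [RCLike.star_def, Complex.mul_conj]
  have e2 : (star b ⬝ᵥ x) * star (star b ⬝ᵥ x) = (Complex.normSq (star b ⬝ᵥ x) : ℂ) := by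
    rw [RCLike.star_def, Complex.mul_conj]
  rw [e1, e2]
  have : ((ε : ℂ) ^ 2) * (Complex.normSq (star b ⬝ᵥ x) : ℂ)
      = ((ε ^ 2 * Complex.normSq (star b ⬝ᵥ x) : ℝ) : ℂ) := by push_cast; ring
  rw [this, ← Complex.ofReal_add]
  rw [show (0 : ℂ) = ((0 : ℝ) : ℂ) by norm_num, Complex.real_lt_real]
  rcases hz with h | h
  · exact add_pos_of_pos_of_nonneg (Complex.normSq_pos.mpr h)
      (mul_nonneg (sq_nonneg _) (Complex.normSq_nonneg _))
  · exact add_pos_of_nonneg_of_pos (Complex.normSq_nonneg _)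
      (mul_pos (by positivity) (Complex.normSq_pos.mpr h))

lemma one_sub_A (a b : Fin 2 → ℂ)
    (hres : vecMulVec a (star a) + vecMulVec b (star b) = 1) :
    (1 : Matrix (Fin 2) (Fin 2) ℂ) - (2 : ℂ)⁻¹ • vecMulVec (a + b) (star (a + b))
      = (2 : ℂ)⁻¹ • vecMulVec (a - b) (star (a - b)) := by
  rw [← hres]
  ext i j
  simp only [Matrix.sub_apply, Matrix.add_apply, Matrix.smul_apply, vecMulVec_apply,
    Pi.star_apply, Pi.add_apply, Pi.sub_apply, star_add, star_sub, smul_eq_mul]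
  ring

lemma key (a b : Fin 2 → ℂ) (ε : ℝ) (hε : 0 < ε)
    (ha : star a ⬝ᵥ a = 1) (hb : star b ⬝ᵥ b = 1) (hab : star a ⬝ᵥ b = 0)
    (W A : Matrix (Fin 2) (Fin 2) ℂ)
    (hW : W = vecMulVec a (star a) + ((ε : ℂ) ^ 2) • vecMulVec b (star b))
    (hA : A = (2 : ℂ)⁻¹ • vecMulVec (a + b) (star (a + b)))
    (hWpd : W.PosDef)
    (f g : Fin 2 → ℂ)
    (hf : f = hWpd.posSemidef.sqrt.mulVec b)
    (hg : g = hWpd.inv.posSemidef.sqrt.mulVec a) :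
    ‖star (W.mulVec (hWpd.inv.posSemidef.sqrt.mulVec g)) ⬝ᵥ
        A.mulVec (W⁻¹.mulVec (hWpd.posSemidef.sqrt.mulVec f))‖ = 1 / 2 ∧
    euclNorm f * euclNorm g = ε := by
  have hba := hba' a b hab
  have hεC : (ε : ℂ) ≠ 0 := by exact_mod_cast hε.ne'
  have hSpsd : (vecMulVec a (star a) + (ε : ℂ) • vecMulVec b (star b)).PosSemidef :=
    (opsd a).add (psd_smul (opsd b) hε.le)
  have hS2 : (vecMulVec a (star a) + (ε : ℂ) • vecMulVec b (star b)) ^ 2 = W := by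
    rw [sq, comb_mul a b ha hb hab, ← sq, hW]
  have hsqrtW : hWpd.posSemidef.sqrt = vecMulVec a (star a) + (ε : ℂ) • vecMulVec b (star b) :=
    (hSpsd.eq_sqrt_of_sq_eq hWpd.posSemidef hS2).symm
  have hres := resolution a b ha hb hab
  have hWinv : W⁻¹ = vecMulVec a (star a) + (((ε : ℂ) ^ 2)⁻¹) • vecMulVec b (star b) := by
    apply inv_eq_right_inv
    rw [hW, comb_mul a b ha hb hab, mul_inv_cancel₀ (pow_ne_zero 2 hεC), one_smul, hres]
  have hTpsd : (vecMulVec a (star a) + ((ε : ℂ)⁻¹) • vecMulVec b (star b)).PosSemidef := by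
    have h : ((ε⁻¹ : ℝ) : ℂ) = (ε : ℂ)⁻¹ := by push_cast; ring
    exact (opsd a).add (h ▸ psd_smul (opsd b) (inv_nonneg.mpr hε.le))
  have hT2 : (vecMulVec a (star a) + ((ε : ℂ)⁻¹) • vecMulVec b (star b)) ^ 2 = W⁻¹ := by
    rw [sq, comb_mul a b ha hb hab, ← mul_inv, ← sq, hWinv]
  have hsqrtWinv : hWpd.inv.posSemidef.sqrt
      = vecMulVec a (star a) + ((ε : ℂ)⁻¹) • vecMulVec b (star b) :=
    (hTpsd.eq_sqrt_of_sq_eq hWpd.inv.posSemidef hT2).symm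
  have hfv : f = (ε : ℂ) • b := by
    rw [hf, hsqrtW, comb_mulVec, hab, hb, zero_smul, mul_one, zero_add]
  have hgv : g = a := by
    rw [hg, hsqrtWinv, comb_mulVec, ha, hba, one_smul, mul_zero, zero_smul, add_zero]
  refine ⟨?_, ?_⟩
  · have h1 : hWpd.inv.posSemidef.sqrt.mulVec g = a := by
      rw [hgv, hsqrtWinv, comb_mulVec, ha, hba, one_smul, mul_zero, zero_smul, add_zero]
    have h2 : W.mulVec a = a := by
      rw [hW, comb_mulVec, ha, hba, one_smul, mul_zero, zero_smul, add_zero]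
    have h3 : hWpd.posSemidef.sqrt.mulVec f = ((ε : ℂ) ^ 2) • b := by
      rw [hfv, mulVec_smul, hsqrtW, comb_mulVec, hab, hb, zero_smul, mul_one, zero_add,
        smul_smul, ← sq]
    have h4 : W⁻¹.mulVec (((ε : ℂ) ^ 2) • b) = b := by
      rw [mulVec_smul, hWinv, comb_mulVec, hab, hb, zero_smul, mul_one, zero_add,
        smul_smul, mul_inv_cancel₀ (pow_ne_zero 2 hεC), one_smul]
    have h5 : A.mulVec b = (2 : ℂ)⁻¹ • (a + b) := by
      rw [hA, smul_mulVec, ovv, star_add, add_dotProduct, hab, hb, zero_add, one_smul]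
    rw [h1, h2, h3, h4, h5]
    rw [dotProduct_smul, dotProduct_add, ha, hab, add_zero, smul_eq_mul, mul_one]
    norm_num
  · rw [hfv, hgv, euclNorm_smul, euclNorm_unit b hb, euclNorm_unit a ha]
    simp [abs_of_pos hε]

/-- with `W = a a* + ε² b b*`, `A = ½ (a+b)(a+b)*`, `f = W^{1/2} b`,
`g = W^{-1/2} a`, we get `|⟨A W⁻¹ W^{1/2} f, W W^{-1/2} g⟩| = 1/2` while `‖f‖ ‖g‖ = ε`;
hence no constant `C` works in the inner-product form of the bilinear embedding,
even though `0 ≤ A ≤ 1`. -/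
theorem bilinear_embedding_inner_failure
    (a b : Fin 2 → ℂ) (ε : ℝ) (hε : 0 < ε)
    (ha : star a ⬝ᵥ a = 1) (hb : star b ⬝ᵥ b = 1) (hab : star a ⬝ᵥ b = 0)
    (W A : Matrix (Fin 2) (Fin 2) ℂ)
    (hW : W = vecMulVec a (star a) + ((ε : ℂ) ^ 2) • vecMulVec b (star b))
    (hA : A = (2 : ℂ)⁻¹ • vecMulVec (a + b) (star (a + b)))
    (hWpd : W.PosDef)
    (f g : Fin 2 → ℂ)
    (hf : f = hWpd.posSemidef.sqrt.mulVec b)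
    (hg : g = hWpd.inv.posSemidef.sqrt.mulVec a) :
    ‖star (W.mulVec (hWpd.inv.posSemidef.sqrt.mulVec g)) ⬝ᵥ
        A.mulVec (W⁻¹.mulVec (hWpd.posSemidef.sqrt.mulVec f))‖ = 1 / 2 ∧
    euclNorm f * euclNorm g = ε ∧
    ¬ ∃ C : ℝ, ∀ (V B : Matrix (Fin 2) (Fin 2) ℂ) (hV : V.PosDef)
        (_ : B.PosSemidef) (_ : ((1 : Matrix (Fin 2) (Fin 2) ℂ) - B).PosSemidef)
        (u v : Fin 2 → ℂ),
        ‖star (V.mulVec (hV.inv.posSemidef.sqrt.mulVec v)) ⬝ᵥ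
            B.mulVec (V⁻¹.mulVec (hV.posSemidef.sqrt.mulVec u))‖ ≤
          C * (euclNorm u * euclNorm v) := by
  obtain ⟨k1, k2⟩ := key a b ε hε ha hb hab W A hW hA hWpd f g hf hg
  refine ⟨k1, k2, ?_⟩
  rintro ⟨C, hC⟩
  set ε₀ : ℝ := (2 * (|C| + 1))⁻¹ with hε₀def
  have hC1 : (0 : ℝ) < |C| + 1 := by positivity
  have hε₀ : 0 < ε₀ := by positivity
  set a₀ : Fin 2 → ℂ := ![1, 0] with ha₀def
  set b₀ : Fin 2 → ℂ := ![0, 1] with hb₀def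
  have ha₀ : star a₀ ⬝ᵥ a₀ = 1 := by simp [ha₀def, dotProduct, Fin.sum_univ_two]
  have hb₀ : star b₀ ⬝ᵥ b₀ = 1 := by simp [hb₀def, dotProduct, Fin.sum_univ_two]
  have hab₀ : star a₀ ⬝ᵥ b₀ = 0 := by simp [ha₀def, hb₀def, dotProduct, Fin.sum_univ_two]
  have hres₀ := resolution a₀ b₀ ha₀ hb₀ hab₀
  set W₀ : Matrix (Fin 2) (Fin 2) ℂ :=
    vecMulVec a₀ (star a₀) + ((ε₀ : ℂ) ^ 2) • vecMulVec b₀ (star b₀) with hW₀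
  set A₀ : Matrix (Fin 2) (Fin 2) ℂ :=
    (2 : ℂ)⁻¹ • vecMulVec (a₀ + b₀) (star (a₀ + b₀)) with hA₀
  have hcast2 : (((ε₀ ^ 2 : ℝ)) : ℂ) = (ε₀ : ℂ) ^ 2 := by push_cast; ring
  have hWherm : W₀.IsHermitian :=
    (opsd a₀).1.add (hcast2 ▸ (psd_smul (opsd b₀) (sq_nonneg ε₀)).1)
  have hW₀pd : W₀.PosDef := Wpd a₀ b₀ ε₀ hε₀ hres₀ hWherm
  have hcast3 : (((2⁻¹ : ℝ)) : ℂ) = (2 : ℂ)⁻¹ := by push_cast; ring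
  have hA₀psd : A₀.PosSemidef := by
    rw [hA₀, ← hcast3]
    exact psd_smul (opsd (a₀ + b₀)) (by norm_num)
  have h1mA₀psd : ((1 : Matrix (Fin 2) (Fin 2) ℂ) - A₀).PosSemidef := by
    rw [hA₀, one_sub_A a₀ b₀ hres₀, ← hcast3]
    exact psd_smul (opsd (a₀ - b₀)) (by norm_num)
  obtain ⟨m1, m2⟩ := key a₀ b₀ ε₀ hε₀ ha₀ hb₀ hab₀ W₀ A₀ rfl rfl hW₀pd
    (hW₀pd.posSemidef.sqrt.mulVec b₀) (hW₀pd.inv.posSemidef.sqrt.mulVec a₀) rfl rfl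
  have := hC W₀ A₀ hW₀pd hA₀psd h1mA₀psd
    (hW₀pd.posSemidef.sqrt.mulVec b₀) (hW₀pd.inv.posSemidef.sqrt.mulVec a₀)
  rw [m1, m2] at this
  have habs : C * ε₀ ≤ |C| * ε₀ := mul_le_mul_of_nonneg_right (le_abs_self C) hε₀.le
  have hlt : |C| * ε₀ < (|C| + 1) * ε₀ := by nlinarith
  have heq : (|C| + 1) * ε₀ = 1 / 2 := by
    rw [hε₀def]
    field_simp
  linarith
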